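/- Let d : ℕ×ℕ → ℝ be a finitely supported nonnegative function with Σ_{(p,q)} d_{p,q} = 1 and Σ_{(p,q)} (p+q) d_{p,q} = K for some real K > 0, and let δ : ℕ×ℕ → ℝ with 0 ≤ δ_{p,q} ≤ 1 for all (p,q). Define η_T = (1/K) Σ_{(p,q)} (p δ_{p,q} + q(1−δ_{p,q})) d_{p,q}, η_F = (1/K) Σ_{(p,q)} (q δ_{p,q} + p(1−δ_{p,q})) d_{p,q}, and ε_{T,F} = (1/K) Σ_{(p,q)} (p+q) δ_{p,q}(1−δ_{p,q}) d_{p,q}. Then ε_{T,F} ≤ η_T η_F. Moreover, if there exist p ≥ 1 and q ≥ 1 with d_{p,q} > 0 (the model allows non-pure literals), then ε_{T,F} = η_T η_F if and only if δ_{p,q} = 1/2 for every (p,q) with (p+q) d_{p,q} ≠ 0. -/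

import Mathlib

open Finset

/-- The pairwise quantity used in the symmetrized proof. -/
noncomputable def Gfun (δ : ℕ × ℕ → ℝ) (i j : ℕ × ℕ) : ℝ :=
  ((i.1 : ℝ) * δ i + (i.2 : ℝ) * (1 - δ i)) * ((j.2 : ℝ) * δ j + (j.1 : ℝ) * (1 - δ j))
  + ((j.1 : ℝ) * δ j + (j.2 : ℝ) * (1 - δ j)) * ((i.2 : ℝ) * δ i + (i.1 : ℝ) * (1 - δ i))
  - ((i.1 : ℝ) + (i.2 : ℝ)) * ((j.1 : ℝ) + (j.2 : ℝ)) * (δ i * (1 - δ i) + δ j * (1 - δ j))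

lemma key_identity (p q p' q' x x' : ℝ) :
    (p + q) * (p' + q') *
      ((p * x + q * (1 - x)) * (q' * x' + p' * (1 - x'))
        + (p' * x' + q' * (1 - x')) * (q * x + p * (1 - x))
        - (p + q) * (p' + q') * (x * (1 - x) + x' * (1 - x')))
    = ((p' + q') * (p * x + q * (1 - x)) - (p + q) * (p' * x' + q' * (1 - x'))) ^ 2
      + (p' + q') ^ 2 * (p * q) * (2 * x - 1) ^ 2
      + (p + q) ^ 2 * (p' * q') * (2 * x' - 1) ^ 2 := by ring

lemma Gfun_key (δ : ℕ × ℕ → ℝ) (i j : ℕ × ℕ) :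
    ((i.1 : ℝ) + (i.2 : ℝ)) * ((j.1 : ℝ) + (j.2 : ℝ)) * Gfun δ i j
    = (((j.1 : ℝ) + (j.2 : ℝ)) * ((i.1 : ℝ) * δ i + (i.2 : ℝ) * (1 - δ i))
        - ((i.1 : ℝ) + (i.2 : ℝ)) * ((j.1 : ℝ) * δ j + (j.2 : ℝ) * (1 - δ j))) ^ 2
      + ((j.1 : ℝ) + (j.2 : ℝ)) ^ 2 * ((i.1 : ℝ) * (i.2 : ℝ)) * (2 * δ i - 1) ^ 2
      + ((i.1 : ℝ) + (i.2 : ℝ)) ^ 2 * ((j.1 : ℝ) * (j.2 : ℝ)) * (2 * δ j - 1) ^ 2 := by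
  unfold Gfun; ring

lemma Gfun_nonneg (δ : ℕ × ℕ → ℝ) (i j : ℕ × ℕ) : 0 ≤ Gfun δ i j := by
  rcases Nat.eq_zero_or_pos (i.1 + i.2) with hi | hi
  · obtain ⟨h1, h2⟩ := Nat.add_eq_zero.mp hi
    unfold Gfun
    rw [h1, h2]
    push_cast
    ring_nf
    exact le_rfl
  · rcases Nat.eq_zero_or_pos (j.1 + j.2) with hj | hj
    · obtain ⟨h1, h2⟩ := Nat.add_eq_zero.mp hj
      unfold Gfun
      rw [h1, h2]
      push_cast
      ring_nf
      exact le_rfl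
    · have hi' : (0 : ℝ) < (i.1 : ℝ) + (i.2 : ℝ) := by exact_mod_cast hi
      have hj' : (0 : ℝ) < (j.1 : ℝ) + (j.2 : ℝ) := by exact_mod_cast hj
      have hc : (0 : ℝ) < ((i.1 : ℝ) + (i.2 : ℝ)) * ((j.1 : ℝ) + (j.2 : ℝ)) := mul_pos hi' hj'
      have h2 : 0 ≤ ((i.1 : ℝ) + (i.2 : ℝ)) * ((j.1 : ℝ) + (j.2 : ℝ)) * Gfun δ i j := by
        rw [Gfun_key]
        positivity
      by_contra h
      push_neg at h
      have := mul_pos hc (neg_pos.mpr h)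
      nlinarith [h2, this]

lemma half_of_key (p q p' q' x x' : ℝ) (hp : 0 ≤ p) (hq : 0 ≤ q)
    (hp1 : 1 ≤ p') (hq1 : 1 ≤ q') (hs : 0 < p + q)
    (hkey : (0:ℝ) = ((p' + q') * (p * x + q * (1 - x)) - (p + q) * (p' * x' + q' * (1 - x'))) ^ 2
      + (p' + q') ^ 2 * (p * q) * (2 * x - 1) ^ 2
      + (p + q) ^ 2 * (p' * q') * (2 * x' - 1) ^ 2) :
    x = 1 / 2 := by
  have t1 := sq_nonneg ((p' + q') * (p * x + q * (1 - x)) - (p + q) * (p' * x' + q' * (1 - x')))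
  have t2 : (0:ℝ) ≤ (p' + q') ^ 2 * (p * q) * (2 * x - 1) ^ 2 := by positivity
  have t3 : (0:ℝ) ≤ (p + q) ^ 2 * (p' * q') * (2 * x' - 1) ^ 2 := by positivity
  have h1 : ((p' + q') * (p * x + q * (1 - x)) - (p + q) * (p' * x' + q' * (1 - x'))) ^ 2 = 0 := by
    linarith
  have h2 : (p' + q') ^ 2 * (p * q) * (2 * x - 1) ^ 2 = 0 := by linarith
  have h3 : (p + q) ^ 2 * (p' * q') * (2 * x' - 1) ^ 2 = 0 := by linarith
  have hx' : 2 * x' - 1 = 0 := by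
    have hc : (0:ℝ) < (p + q) ^ 2 * (p' * q') := by positivity
    have := (mul_eq_zero.mp h3).resolve_left (ne_of_gt hc)
    exact sq_eq_zero_iff.mp this
  have ha0 : (p' + q') * (p * x + q * (1 - x)) - (p + q) * (p' * x' + q' * (1 - x')) = 0 :=
    sq_eq_zero_iff.mp h1
  have hs' : (0:ℝ) < p' + q' := by linarith
  have ha : p * x + q * (1 - x) = (p + q) / 2 := by
    apply mul_left_cancel₀ (ne_of_gt hs')
    linear_combination ha0 + ((p + q) * (p' - q') / 2) * hx'
  have hb : p * q * (2 * x - 1) ^ 2 = 0 := by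
    rcases mul_eq_zero.mp h2 with h | h
    · rcases mul_eq_zero.mp h with h' | h'
      · exact absurd h' (by positivity)
      · rw [h']; ring
    · rw [h]; ring
  by_contra hxne
  have hxs : x - 1 / 2 ≠ 0 := sub_ne_zero.mpr hxne
  have hfac : (p - q) * (x - 1 / 2) = 0 := by linear_combination ha
  have hpq : p = q := by
    have := (mul_eq_zero.mp hfac).resolve_right hxs
    linarith
  have hsq : (2 * x - 1) ^ 2 ≠ 0 := by
    intro h
    exact hxs (by
      have := sq_eq_zero_iff.mp h
      linarith)
  have hpq0 : p * q = 0 := (mul_eq_zero.mp hb).resolve_right hsq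
  rw [hpq] at hpq0 hs
  have : q = 0 := mul_self_eq_zero.mp hpq0
  linarith

theorem distributional_eps_le_eta_eta
    (d : ℕ × ℕ →₀ ℝ) (hd : ∀ pq, 0 ≤ d pq)
    (hd1 : ∑ pq ∈ d.support, d pq = 1)
    (K : ℝ) (hK : 0 < K)
    (hK2 : ∑ pq ∈ d.support, ((pq.1 : ℝ) + (pq.2 : ℝ)) * d pq = K)
    (δ : ℕ × ℕ → ℝ) (hδ : ∀ pq, δ pq ∈ Set.Icc (0 : ℝ) 1) :
    ((1 / K) * ∑ pq ∈ d.support,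
        ((pq.1 : ℝ) + (pq.2 : ℝ)) * (δ pq * (1 - δ pq)) * d pq
      ≤ ((1 / K) * ∑ pq ∈ d.support,
            ((pq.1 : ℝ) * δ pq + (pq.2 : ℝ) * (1 - δ pq)) * d pq) *
        ((1 / K) * ∑ pq ∈ d.support,
            ((pq.2 : ℝ) * δ pq + (pq.1 : ℝ) * (1 - δ pq)) * d pq)) ∧
    ((∃ p q : ℕ, 1 ≤ p ∧ 1 ≤ q ∧ 0 < d (p, q)) →
      ((1 / K) * ∑ pq ∈ d.support,
          ((pq.1 : ℝ) + (pq.2 : ℝ)) * (δ pq * (1 - δ pq)) * d pq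
        = ((1 / K) * ∑ pq ∈ d.support,
              ((pq.1 : ℝ) * δ pq + (pq.2 : ℝ) * (1 - δ pq)) * d pq) *
          ((1 / K) * ∑ pq ∈ d.support,
              ((pq.2 : ℝ) * δ pq + (pq.1 : ℝ) * (1 - δ pq)) * d pq)
        ↔ ∀ pq : ℕ × ℕ, ((pq.1 : ℝ) + (pq.2 : ℝ)) * d pq ≠ 0 → δ pq = 1 / 2)) := by
  classical
  set s := d.support with hs
  set A := ∑ pq ∈ s, ((pq.1 : ℝ) + (pq.2 : ℝ)) * (δ pq * (1 - δ pq)) * d pq with hA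
  set U := ∑ pq ∈ s, ((pq.1 : ℝ) * δ pq + (pq.2 : ℝ) * (1 - δ pq)) * d pq with hU
  set V := ∑ pq ∈ s, ((pq.2 : ℝ) * δ pq + (pq.1 : ℝ) * (1 - δ pq)) * d pq with hV
  -- the symmetrized double-sum identity
  have hdouble : ∑ i ∈ s, ∑ j ∈ s, (d i * d j) * Gfun δ i j = 2 * (U * V) - 2 * (K * A) := by
    have e1 : U * V = ∑ i ∈ s, ∑ j ∈ s,
        (((i.1 : ℝ) * δ i + (i.2 : ℝ) * (1 - δ i)) * d i) *
        (((j.2 : ℝ) * δ j + (j.1 : ℝ) * (1 - δ j)) * d j) := by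
      rw [hU, hV, Finset.sum_mul_sum]
    have e2 : V * U = ∑ i ∈ s, ∑ j ∈ s,
        (((i.2 : ℝ) * δ i + (i.1 : ℝ) * (1 - δ i)) * d i) *
        (((j.1 : ℝ) * δ j + (j.2 : ℝ) * (1 - δ j)) * d j) := by
      rw [hU, hV, Finset.sum_mul_sum]
    have e3 : K * A = ∑ i ∈ s, ∑ j ∈ s,
        (((i.1 : ℝ) + (i.2 : ℝ)) * d i) *
        (((j.1 : ℝ) + (j.2 : ℝ)) * (δ j * (1 - δ j)) * d j) := by
      rw [← hK2, hA, Finset.sum_mul_sum]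
    have e4 : A * K = ∑ i ∈ s, ∑ j ∈ s,
        (((i.1 : ℝ) + (i.2 : ℝ)) * (δ i * (1 - δ i)) * d i) *
        (((j.1 : ℝ) + (j.2 : ℝ)) * d j) := by
      rw [← hK2, hA, Finset.sum_mul_sum]
    have expand : ∑ i ∈ s, ∑ j ∈ s, (d i * d j) * Gfun δ i j
        = ∑ i ∈ s, ∑ j ∈ s,
          ((((i.1 : ℝ) * δ i + (i.2 : ℝ) * (1 - δ i)) * d i) *
             (((j.2 : ℝ) * δ j + (j.1 : ℝ) * (1 - δ j)) * d j)
           + (((i.2 : ℝ) * δ i + (i.1 : ℝ) * (1 - δ i)) * d i) *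
             (((j.1 : ℝ) * δ j + (j.2 : ℝ) * (1 - δ j)) * d j)
           - (((i.1 : ℝ) + (i.2 : ℝ)) * d i) *
             (((j.1 : ℝ) + (j.2 : ℝ)) * (δ j * (1 - δ j)) * d j)
           - (((i.1 : ℝ) + (i.2 : ℝ)) * (δ i * (1 - δ i)) * d i) *
             (((j.1 : ℝ) + (j.2 : ℝ)) * d j)) := by
      refine Finset.sum_congr rfl fun i _ => Finset.sum_congr rfl fun j _ => ?_
      unfold Gfun; ring
    rw [expand]
    simp only [Finset.sum_sub_distrib, Finset.sum_add_distrib]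
    rw [← e1, ← e2, ← e3, ← e4]
    ring
  have hterm_nonneg : ∀ i ∈ s, ∀ j ∈ s, (0:ℝ) ≤ (d i * d j) * Gfun δ i j := fun i _ j _ =>
    mul_nonneg (mul_nonneg (hd i) (hd j)) (Gfun_nonneg δ i j)
  have hsum_nonneg : 0 ≤ ∑ i ∈ s, ∑ j ∈ s, (d i * d j) * Gfun δ i j :=
    Finset.sum_nonneg fun i hi => Finset.sum_nonneg fun j hj => hterm_nonneg i hi j hj
  have hKA_le : K * A ≤ U * V := by linarith [hdouble ▸ hsum_nonneg]
  have hKne : K ≠ 0 := ne_of_gt hK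
  have hmain : (1 / K) * A ≤ ((1 / K) * U) * ((1 / K) * V) := by
    have hdiff : ((1 / K) * U) * ((1 / K) * V) - (1 / K) * A = (U * V - K * A) / K ^ 2 := by
      field_simp
    have : 0 ≤ (U * V - K * A) / K ^ 2 :=
      div_nonneg (by linarith) (by positivity)
    linarith
  refine ⟨hmain, ?_⟩
  rintro ⟨p₀, q₀, hp₀, hq₀, hd₀⟩
  have hmem0 : (p₀, q₀) ∈ s := Finsupp.mem_support_iff.mpr (ne_of_gt hd₀)
  constructor
  · -- equality implies δ = 1/2 on the support
    intro heq
    have hUVKA : U * V = K * A := by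
      have h1 : ((1 / K) * U) * ((1 / K) * V) - (1 / K) * A = (U * V - K * A) / K ^ 2 := by
        field_simp
      have h2 : (U * V - K * A) / K ^ 2 = 0 := by rw [← h1, heq]; ring
      have := (div_eq_zero_iff.mp h2).resolve_right (by positivity)
      linarith
    have hsum0 : ∑ i ∈ s, ∑ j ∈ s, (d i * d j) * Gfun δ i j = 0 := by
      rw [hdouble]; linarith
    have hzero : ∀ i ∈ s, ∀ j ∈ s, (d i * d j) * Gfun δ i j = 0 := by
      intro i hi j hj
      have hinner : ∀ i ∈ s, (0:ℝ) ≤ ∑ j ∈ s, (d i * d j) * Gfun δ i j := fun i hi =>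
        Finset.sum_nonneg fun j hj => hterm_nonneg i hi j hj
      have h1 := (Finset.sum_eq_zero_iff_of_nonneg hinner).mp hsum0 i hi
      exact (Finset.sum_eq_zero_iff_of_nonneg (fun j hj => hterm_nonneg i hi j hj)).mp h1 j hj
    intro pq hpq
    obtain ⟨hS, hdne⟩ := mul_ne_zero_iff.mp hpq
    have hmem : pq ∈ s := Finsupp.mem_support_iff.mpr hdne
    have hdpos : 0 < d pq := lt_of_le_of_ne (hd pq) (Ne.symm hdne)
    have hG0 : Gfun δ pq (p₀, q₀) = 0 := by
      have := hzero pq hmem (p₀, q₀) hmem0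
      have hdd : 0 < d pq * d (p₀, q₀) := mul_pos hdpos hd₀
      exact (mul_eq_zero.mp this).resolve_left (ne_of_gt hdd)
    have hkey := Gfun_key δ pq (p₀, q₀)
    rw [hG0, mul_zero] at hkey
    have hpn : (0:ℝ) ≤ (pq.1 : ℝ) := Nat.cast_nonneg _
    have hqn : (0:ℝ) ≤ (pq.2 : ℝ) := Nat.cast_nonneg _
    have hp1 : (1:ℝ) ≤ (p₀ : ℝ) := by exact_mod_cast hp₀
    have hq1 : (1:ℝ) ≤ (q₀ : ℝ) := by exact_mod_cast hq₀
    have hspos : (0:ℝ) < (pq.1 : ℝ) + (pq.2 : ℝ) := lt_of_le_of_ne (by positivity) (Ne.symm hS)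
    exact half_of_key _ _ _ _ _ _ hpn hqn hp1 hq1 hspos hkey
  · -- δ = 1/2 on the support implies equality
    intro hhalf
    have hAval : A = (1 / 4) * K := by
      rw [hA, ← hK2, Finset.mul_sum]
      refine Finset.sum_congr rfl fun pq hmem => ?_
      have hdne : d pq ≠ 0 := Finsupp.mem_support_iff.mp hmem
      by_cases hSd : ((pq.1 : ℝ) + (pq.2 : ℝ)) * d pq = 0
      · have hS0 : ((pq.1 : ℝ) + (pq.2 : ℝ)) = 0 := (mul_eq_zero.mp hSd).resolve_right hdne
        rw [hS0]; ring
      · rw [hhalf pq hSd]; ring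
    have hUval : U = (1 / 2) * K := by
      rw [hU, ← hK2, Finset.mul_sum]
      refine Finset.sum_congr rfl fun pq hmem => ?_
      have hdne : d pq ≠ 0 := Finsupp.mem_support_iff.mp hmem
      by_cases hSd : ((pq.1 : ℝ) + (pq.2 : ℝ)) * d pq = 0
      · have hS0 : ((pq.1 : ℝ) + (pq.2 : ℝ)) = 0 := (mul_eq_zero.mp hSd).resolve_right hdne
        have hp0 : (pq.1 : ℝ) = 0 := by
          have := Nat.cast_nonneg (α := ℝ) pq.1
          have := Nat.cast_nonneg (α := ℝ) pq.2
          linarith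
        have hq0 : (pq.2 : ℝ) = 0 := by linarith
        rw [hp0, hq0]; ring
      · rw [hhalf pq hSd]; ring
    have hVval : V = (1 / 2) * K := by
      rw [hV, ← hK2, Finset.mul_sum]
      refine Finset.sum_congr rfl fun pq hmem => ?_
      have hdne : d pq ≠ 0 := Finsupp.mem_support_iff.mp hmem
      by_cases hSd : ((pq.1 : ℝ) + (pq.2 : ℝ)) * d pq = 0
      · have hS0 : ((pq.1 : ℝ) + (pq.2 : ℝ)) = 0 := (mul_eq_zero.mp hSd).resolve_right hdne
        have hp0 : (pq.1 : ℝ) = 0 := by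
          have := Nat.cast_nonneg (α := ℝ) pq.1
          have := Nat.cast_nonneg (α := ℝ) pq.2
          linarith
        have hq0 : (pq.2 : ℝ) = 0 := by linarith
        rw [hp0, hq0]; ring
      · rw [hhalf pq hSd]; ring
    rw [hAval, hUval, hVval]
    field_simp
    ring
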